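/- arXiv:2105.09359 — 6 statements merged into one kernel-verified Lean document; each statement's English description precedes it below -/
import Mathlib

section
/- Let B be a nonnegative n×n matrix whose entries have the form B(i,j) = γ_i · a(i,j) / (G_i + Σ_k a(k,i)), where a(i,j) ≥ 0, γ_i ∈ (0,1], G_i ≥ 0, and G_i + Σ_k a(k,i) > 0 for all i. Then the spectral radius of B is at most 1. -/
/-- The spectral radius of a real square matrix: the supremum of the moduli of its
complex eigenvalues (roots of the characteristic polynomial over `ℂ`). -/
noncomputable def specRad {n : ℕ} (M : Matrix (Fin n) (Fin n) ℝ) : ℝ :=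
  sSup {r : ℝ | ∃ z : ℂ, (Matrix.charpoly (M.map (Complex.ofReal : ℝ → ℂ))).IsRoot z ∧
    r = ‖z‖}

open Polynomial in
lemma eval_charpoly_aux {n : ℕ} (M : Matrix (Fin n) (Fin n) ℂ) (z : ℂ) :
    (Matrix.charpoly M).eval z = (z • (1 : Matrix (Fin n) (Fin n) ℂ) - M).det := by
  rw [Matrix.charpoly, ← Polynomial.coe_evalRingHom, RingHom.map_det]
  congr 1
  ext i j
  by_cases h : i = j
  · subst h
    simp [Matrix.charmatrix_apply_eq, Matrix.one_apply]
  · simp [Matrix.charmatrix_apply_ne _ _ _ h, Matrix.one_apply_ne h]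

/-- A skew-sub-stochastic matrix `B i j = γ i * a i j / (G i + ∑ k, a k i)`
with `a ≥ 0`, `γ i ∈ Set.Ioc (0 : ℝ) 1`, `G i ≥ 0` and positive denominators has spectral radius at
most one. -/
theorem stmt_1 {n : ℕ} (B a : Matrix (Fin n) (Fin n) ℝ) (γ G : Fin n → ℝ)
    (ha : ∀ i j, 0 ≤ a i j) (hγ : ∀ i, γ i ∈ Set.Ioc (0 : ℝ) 1) (hG : ∀ i, 0 ≤ G i)
    (hden : ∀ i, 0 < G i + ∑ k, a k i)
    (hB : ∀ i j, B i j = γ i * a i j / (G i + ∑ k, a k i)) :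
    specRad B ≤ 1 := by
  set D : Fin n → ℝ := fun i => G i + ∑ k, a k i with hD
  have hBnn : ∀ i j, 0 ≤ B i j := fun i j => by
    rw [hB]
    exact div_nonneg (mul_nonneg (hγ i).1.le (ha i j)) (hden i).le
  apply Real.sSup_le _ zero_le_one
  rintro r ⟨z, hz, rfl⟩
  -- turn the root into an eigenvector of the transpose
  set M : Matrix (Fin n) (Fin n) ℂ := (B.map (Complex.ofReal : ℝ → ℂ)) with hM
  have hdet : (z • (1 : Matrix (Fin n) (Fin n) ℂ) - M).det = 0 := by
    rw [← eval_charpoly_aux]; exact hz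
  have hdetT : Matrix.det (((z • (1 : Matrix (Fin n) (Fin n) ℂ) - M).transpose)) = 0 := by
    rw [Matrix.det_transpose]; exact hdet
  obtain ⟨v, hv0, hvz⟩ := (Matrix.exists_mulVec_eq_zero_iff).mpr hdetT
  -- the eigenvector equation: ∀ j, ∑ i, M i j * v i = z * v j
  have heig : ∀ j, ∑ i, (B i j : ℂ) * v i = z * v j := by
    intro j
    have h := congrFun hvz j
    simp only [Matrix.mulVec, Matrix.transpose_apply, Matrix.sub_apply, Matrix.smul_apply,
      Matrix.one_apply, Pi.zero_apply, dotProduct, smul_eq_mul, sub_mul] at h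
    rw [Finset.sum_sub_distrib, sub_eq_zero] at h
    have h3 : ∑ i, z * (if i = j then (1:ℂ) else 0) * v i = z * v j := by
      simp [mul_ite, ite_mul, Finset.sum_ite_eq' Finset.univ j]
    calc ∑ i, (B i j : ℂ) * v i = ∑ i, M i j * v i := rfl
      _ = z * v j := by rw [← h, h3]
  -- choose the index maximizing |v i| / D i
  obtain ⟨i0, hi0⟩ := Function.ne_iff.mp hv0
  have hne : (Finset.univ : Finset (Fin n)).Nonempty := ⟨i0, Finset.mem_univ i0⟩
  obtain ⟨j0, -, hj0⟩ := Finset.exists_max_image Finset.univ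
    (fun i => ‖v i‖ / D i) hne
  have hfj0pos : 0 < ‖v j0‖ / D j0 := by
    have h1 : 0 < ‖v i0‖ / D i0 :=
      div_pos (norm_pos_iff.mpr (by simpa using hi0)) (hden i0)
    exact lt_of_lt_of_le h1 (hj0 i0 (Finset.mem_univ i0))
  have hvj0pos : 0 < ‖v j0‖ := by
    have := mul_pos hfj0pos (hden j0)
    rwa [div_mul_cancel₀] at this
    exact (hden j0).ne'
  -- the key estimate
  have key : ‖z‖ * ‖v j0‖ ≤ ‖v j0‖ := by
    calc ‖z‖ * ‖v j0‖ = ‖z * v j0‖ := by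
          rw [norm_mul]
      _ = ‖∑ i, (B i j0 : ℂ) * v i‖ := by rw [heig j0]
      _ ≤ ∑ i, ‖(B i j0 : ℂ) * v i‖ := norm_sum_le _ _
      _ = ∑ i, B i j0 * ‖v i‖ := by
          refine Finset.sum_congr rfl fun i _ => ?_
          rw [norm_mul, Complex.norm_real, Real.norm_of_nonneg (hBnn i j0)]
      _ ≤ ∑ i, B i j0 * ((‖v j0‖ / D j0) * D i) := by
          refine Finset.sum_le_sum fun i _ => ?_
          refine mul_le_mul_of_nonneg_left ?_ (hBnn i j0)
          have h1 : ‖v i‖ / D i ≤ ‖v j0‖ / D j0 :=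
            hj0 i (Finset.mem_univ i)
          calc ‖v i‖ = ‖v i‖ / D i * D i := by
                rw [div_mul_cancel₀]; exact (hden i).ne'
            _ ≤ ‖v j0‖ / D j0 * D i :=
                mul_le_mul_of_nonneg_right h1 (hden i).le
      _ ≤ ∑ i, a i j0 * (‖v j0‖ / D j0) := by
          refine Finset.sum_le_sum fun i _ => ?_
          rw [hB i j0]
          have hDi : (0:ℝ) < D i := hden i
          have : γ i * a i j0 / D i * (‖v j0‖ / D j0 * D i)
              = γ i * a i j0 * (‖v j0‖ / D j0) := by
            rw [mul_comm (‖v j0‖ / D j0) (D i), ← mul_assoc,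
              div_mul_cancel₀ _ hDi.ne']
          rw [this]
          refine mul_le_mul_of_nonneg_right ?_ hfj0pos.le
          calc γ i * a i j0 ≤ 1 * a i j0 :=
                mul_le_mul_of_nonneg_right (hγ i).2 (ha i j0)
            _ = a i j0 := one_mul _
      _ = (∑ i, a i j0) * (‖v j0‖ / D j0) := by
          rw [Finset.sum_mul]
      _ ≤ D j0 * (‖v j0‖ / D j0) := by
          refine mul_le_mul_of_nonneg_right ?_ hfj0pos.le
          exact le_add_of_nonneg_left (hG j0)
      _ = ‖v j0‖ := by
          rw [mul_comm, div_mul_cancel₀ _ (hden j0).ne']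
  exact le_of_mul_le_mul_right (by linarith [key]) hvj0pos
end

section
/- Let B be a nonnegative n×n matrix of the form B(i,j) = γ_i · a(i,j) / (G_i + Σ_k a(k,i)) with a(i,j) ≥ 0, γ_i ∈ (0,1], G_i ≥ 0, and Σ_k a(k,i) ≠ 0 for all i. Suppose that for every index i, either (a(i,i) ≠ 0 and γ_i < 1) or G_i > 0. Then the spectral radius of B is strictly less than 1. -/
lemma charpoly_eval_eq {n : ℕ} (M : Matrix (Fin n) (Fin n) ℂ) (z : ℂ) :
    M.charpoly.eval z = (Matrix.scalar (Fin n) z - M).det := by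
  rw [Matrix.charpoly, ← Polynomial.coe_evalRingHom, RingHom.map_det]
  congr 1
  ext i j
  by_cases h : i = j
  · subst h
    simp [Matrix.charmatrix_apply_eq, Matrix.scalar_apply]
  · simp [Matrix.charmatrix_apply_ne _ _ _ h, Matrix.scalar_apply,
      Matrix.diagonal_apply_ne _ h]

lemma eig_lt_one {n : ℕ} (B a : Matrix (Fin n) (Fin n) ℝ) (γ G : Fin n → ℝ)
    (ha : ∀ i j, 0 ≤ a i j) (hγ : ∀ i, γ i ∈ Set.Ioc (0 : ℝ) 1) (hG : ∀ i, 0 ≤ G i)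
    (hcol : ∀ i, ∑ k, a k i ≠ 0)
    (hB : ∀ i j, B i j = γ i * a i j / (G i + ∑ k, a k i))
    (hstrict : ∀ i, (a i i ≠ 0 ∧ γ i < 1) ∨ 0 < G i)
    (z : ℂ) (hz : (Matrix.charpoly (B.map (Complex.ofReal : ℝ → ℂ))).IsRoot z) :
    ‖z‖ < 1 := by
  set M := B.map (Complex.ofReal : ℝ → ℂ) with hM
  set d : Fin n → ℝ := fun i => G i + ∑ k, a k i with hd
  have hdpos : ∀ i, 0 < d i := by
    intro i
    have h1 : 0 ≤ ∑ k, a k i := Finset.sum_nonneg fun k _ => ha k i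
    have h2 : 0 < ∑ k, a k i := lt_of_le_of_ne h1 (Ne.symm (hcol i))
    have := hG i
    simp only [hd]; linarith
  have hdne : ∀ i, (d i : ℂ) ≠ 0 := fun i => by
    exact_mod_cast (hdpos i).ne'
  -- eigenvector of the transpose
  have hdet : (Matrix.scalar (Fin n) z - M).det = 0 := by
    rw [← charpoly_eval_eq]; exact hz
  have hdetT : ((Matrix.scalar (Fin n) z - M).transpose).det = 0 := by
    rw [Matrix.det_transpose]; exact hdet
  obtain ⟨v, hv0, hveq⟩ := (Matrix.exists_mulVec_eq_zero_iff).2 hdetT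
  -- the eigen-equation in coordinates:  z * v j = ∑ i, M i j * v i
  have heig : ∀ j, z * v j = ∑ i, M i j * v i := by
    intro j
    have h0 := congrFun hveq j
    simp only [Matrix.mulVec, dotProduct, Matrix.transpose_apply,
      Matrix.sub_apply, Matrix.scalar_apply, Matrix.diagonal_apply, sub_mul,
      Finset.sum_sub_distrib, Pi.zero_apply] at h0
    have h1 : ∑ i, (if i = j then z else 0) * v i = z * v j := by
      rw [Finset.sum_eq_single j] <;> simp +contextual
    rw [h1] at h0
    exact sub_eq_zero.mp h0
  -- rescale the eigenvector
  set u : Fin n → ℂ := fun i => v i / (d i : ℂ) with hu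
  obtain ⟨i0, hi0⟩ : ∃ i, v i ≠ 0 := Function.ne_iff.mp hv0
  have hui0 : u i0 ≠ 0 := div_ne_zero hi0 (hdne i0)
  obtain ⟨j, -, hjmax⟩ := Finset.exists_max_image Finset.univ
    (fun i => ‖u i‖) ⟨i0, Finset.mem_univ i0⟩
  have hujpos : 0 < ‖u j‖ :=
    lt_of_lt_of_le (by simpa using hui0) (hjmax i0 (Finset.mem_univ i0))
  -- the rescaled eigen-equation
  have heig' : z * (d j : ℂ) * u j = ∑ i, ((γ i * a i j : ℝ) : ℂ) * u i := by
    have hv : ∀ i, v i = (d i : ℂ) * u i := fun i => by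
      rw [hu]
      field_simp
      rw [mul_div_assoc, div_self (hdne i), mul_one]
    have := heig j
    rw [hv j] at this
    rw [mul_assoc, this]
    refine Finset.sum_congr rfl fun i _ => ?_
    rw [hv i, hM, Matrix.map_apply, hB i j, ← mul_assoc]
    congr 1
    rw [← Complex.ofReal_mul]
    congr 1
    rw [div_mul_cancel₀ _ (hdpos i).ne']
  -- the key strict column bound
  have key : ∑ i, γ i * a i j < d j := by
    have hle : ∀ i ∈ Finset.univ, γ i * a i j ≤ a i j := fun i _ => by
      have := (hγ i).2
      nlinarith [ha i j]
    rcases hstrict j with ⟨hne, hlt⟩ | hGpos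
    · have hajj : 0 < a j j := lt_of_le_of_ne (ha j j) (Ne.symm hne)
      have hlt2 : ∑ i, γ i * a i j < ∑ i, a i j :=
        Finset.sum_lt_sum hle ⟨j, Finset.mem_univ j, by nlinarith⟩
      have : ∑ i, a i j ≤ d j := by simp only [hd]; linarith [hG j]
      linarith
    · have hle2 : ∑ i, γ i * a i j ≤ ∑ i, a i j := Finset.sum_le_sum hle
      have : ∑ i, a i j < d j := by simp only [hd]; linarith
      linarith
  -- take absolute values
  have habs : ‖z‖ * (d j * ‖u j‖) < 1 * (d j * ‖u j‖) := by
    have e1 : ‖z‖ * (d j * ‖u j‖)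
        = ‖z * (d j : ℂ) * u j‖ := by
      rw [norm_mul, norm_mul, Complex.norm_real, Real.norm_eq_abs, abs_of_nonneg (hdpos j).le, mul_assoc]
    rw [e1, heig', one_mul]
    calc ‖∑ i, ((γ i * a i j : ℝ) : ℂ) * u i‖
        ≤ ∑ i, ‖((γ i * a i j : ℝ) : ℂ) * u i‖ := by
          exact norm_sum_le _ _
      _ = ∑ i, (γ i * a i j) * ‖u i‖ := by
          refine Finset.sum_congr rfl fun i _ => ?_
          rw [norm_mul, Complex.norm_real, Real.norm_eq_abs, abs_of_nonneg (mul_nonneg (hγ i).1.le (ha i j))]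
      _ ≤ ∑ i, (γ i * a i j) * ‖u j‖ := by
          refine Finset.sum_le_sum fun i _ => ?_
          have h0 : 0 ≤ γ i * a i j := mul_nonneg (hγ i).1.le (ha i j)
          exact mul_le_mul_of_nonneg_left (hjmax i (Finset.mem_univ i)) h0
      _ = (∑ i, γ i * a i j) * ‖u j‖ := by rw [Finset.sum_mul]
      _ < d j * ‖u j‖ := by
          exact mul_lt_mul_of_pos_right key hujpos
  have hpos : 0 < d j * ‖u j‖ := mul_pos (hdpos j) hujpos
  have := lt_of_mul_lt_mul_right habs hpos.le
  simpa using this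

/-- A skew-sub-stochastic matrix with nonvanishing column sums such that for
every index `i` either `a i i ≠ 0 ∧ γ i < 1` or `G i > 0`, has spectral radius strictly
less than one. -/
theorem stmt_3 {n : ℕ} (B a : Matrix (Fin n) (Fin n) ℝ) (γ G : Fin n → ℝ)
    (ha : ∀ i j, 0 ≤ a i j) (hγ : ∀ i, γ i ∈ Set.Ioc (0 : ℝ) 1) (hG : ∀ i, 0 ≤ G i)
    (hcol : ∀ i, ∑ k, a k i ≠ 0)
    (hB : ∀ i j, B i j = γ i * a i j / (G i + ∑ k, a k i))
    (hstrict : ∀ i, (a i i ≠ 0 ∧ γ i < 1) ∨ 0 < G i) :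
    specRad B < 1 := by
  set p := Matrix.charpoly (B.map (Complex.ofReal : ℝ → ℂ)) with hp
  set S : Set ℝ := {r : ℝ | ∃ z : ℂ, p.IsRoot z ∧ r = ‖z‖} with hS
  have hfin : S.Finite := by
    have hpne : p ≠ 0 := (Matrix.charpoly_monic _).ne_zero
    refine Set.Finite.subset ((Polynomial.finite_setOf_isRoot hpne).image (fun z : ℂ => ‖z‖)) ?_
    rintro r ⟨z, hz, rfl⟩
    exact ⟨z, hz, rfl⟩
  have hlt : ∀ r ∈ S, r < 1 := by
    rintro r ⟨z, hz, rfl⟩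
    exact eig_lt_one B a γ G ha hγ hG hcol hB hstrict z hz
  rcases S.eq_empty_or_nonempty with hemp | hne
  · rw [specRad, ← hS, hemp, Real.sSup_empty]; norm_num
  · have hmem := hne.csSup_mem hfin
    rw [specRad, ← hS]
    exact hlt _ hmem
end

section
/- Let B be a nonnegative n×n matrix with spectral radius ρ(B) < 1. Then B is skew-sub-stochastic: there exist a(i,j) ≥ 0, γ_i ∈ (0,1], and G_i ≥ 0 such that G_i + Σ_k a(k,i) > 0 and B(i,j) = γ_i · a(i,j) / (G_i + Σ_k a(k,i)) for all i, j. -/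
/-- `B` is skew-sub-stochastic: `B i j = γ i * a i j / (G i + ∑ k, a k i)` for some
nonnegative `a`, factors `γ i ∈ (0,1]`, slacks `G i ≥ 0`, with positive denominators. -/
def SkewSubStochastic {n : ℕ} (B : Matrix (Fin n) (Fin n) ℝ) : Prop :=
  ∃ (a : Matrix (Fin n) (Fin n) ℝ) (γ G : Fin n → ℝ),
    (∀ i j, 0 ≤ a i j) ∧ (∀ i, γ i ∈ Set.Ioc (0 : ℝ) 1) ∧ (∀ i, 0 ≤ G i) ∧
    (∀ i, 0 < G i + ∑ k, a k i) ∧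
    (∀ i j, B i j = γ i * a i j / (G i + ∑ k, a k i))

open Matrix Polynomial Filter

attribute [local instance] Matrix.linftyOpNormedRing Matrix.linftyOpNormedAlgebra

/-- The characteristic polynomial of the transpose equals that of the matrix. -/
lemma StmtAux.charpoly_transpose {m : ℕ} {R : Type*} [CommRing R]
    (M : Matrix (Fin m) (Fin m) R) : Mᵀ.charpoly = M.charpoly := by
  unfold Matrix.charpoly
  rw [show charmatrix Mᵀ = (charmatrix M)ᵀ by
    ext i j
    simp only [charmatrix_apply, Matrix.transpose_apply, Matrix.sub_apply,
      Matrix.diagonal_apply]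
    by_cases h : i = j <;> simp [h, eq_comm]]
  exact Matrix.det_transpose _

/-- Membership in the spectrum gives a root of the characteristic polynomial. -/
lemma StmtAux.isRoot_charpoly_of_mem_spectrum {m : ℕ} (M : Matrix (Fin m) (Fin m) ℂ)
    (z : ℂ) (hz : z ∈ spectrum ℂ M) : M.charpoly.IsRoot z := by
  rw [spectrum.mem_iff] at hz
  have hdet : (Matrix.scalar (Fin m) z - M).det = 0 := by
    by_contra h
    exact hz ((Matrix.isUnit_iff_isUnit_det _).2 (isUnit_iff_ne_zero.2 h))
  have heval : M.charpoly.eval z = (Matrix.scalar (Fin m) z - M).det := by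
    rw [Matrix.charpoly, _root_.eval_det, matPolyEquiv_charmatrix]
    simp
  simpa [Polynomial.IsRoot, heval] using hdet

/-- If all complex spectrum elements have modulus `< 1`, some power has norm `< 1`. -/
lemma StmtAux.exists_pow_norm_lt_one {m : ℕ} (hm : 0 < m) (M : Matrix (Fin m) (Fin m) ℂ)
    (h : ∀ z ∈ spectrum ℂ M, ‖z‖₊ < 1) : ∃ k ≥ 1, ‖M ^ k‖ < 1 := by
  haveI : Nonempty (Fin m) := ⟨⟨0, hm⟩⟩
  haveI : Nontrivial (Matrix (Fin m) (Fin m) ℂ) := Matrix.nonempty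
  haveI : CompleteSpace (Matrix (Fin m) (Fin m) ℂ) := FiniteDimensional.complete ℂ _
  have hρ : spectralRadius ℂ M < 1 := by
    simpa using spectrum.spectralRadius_lt_of_forall_lt M h
  have htends := spectrum.pow_nnnorm_pow_one_div_tendsto_nhds_spectralRadius M
  have hev : ∀ᶠ k : ℕ in atTop, (‖M ^ k‖₊ : ENNReal) ^ (1 / (k : ℝ)) < 1 :=
    htends.eventually_lt_const hρ
  obtain ⟨k, hk1, hklt⟩ := (hev.and (eventually_ge_atTop 1)).exists
  refine ⟨k, hklt, ?_⟩
  have hlt : (‖M ^ k‖₊ : ENNReal) < 1 := by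
    by_contra hcon
    push_neg at hcon
    have : (1 : ENNReal) ≤ (‖M ^ k‖₊ : ENNReal) ^ (1 / (k : ℝ)) := by
      calc (1 : ENNReal) = 1 ^ (1 / (k : ℝ)) := by simp
        _ ≤ _ := ENNReal.rpow_le_rpow hcon (by positivity)
    exact absurd hk1 (not_lt.2 this)
  exact ENNReal.coe_lt_coe.mp (by simpa using hlt)

lemma StmtAux.pow_entry_nonneg {m : ℕ} (M : Matrix (Fin m) (Fin m) ℝ)
    (h : ∀ i j, 0 ≤ M i j) (k : ℕ) : ∀ i j, 0 ≤ (M ^ k) i j := by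
  induction k with
  | zero =>
    intro i j
    rw [pow_zero]
    by_cases hij : i = j <;> simp [Matrix.one_apply, hij]
  | succ k ih =>
    intro i j
    rw [pow_succ, Matrix.mul_apply]
    exact Finset.sum_nonneg fun l _ => mul_nonneg (ih i l) (h l j)

/-- For an entrywise-nonnegative matrix of norm `< 1`, there is a vector `u ≥ 1`
with `x *ᵥ u = u - 1`. -/
lemma StmtAux.exists_u {m : ℕ} (x : Matrix (Fin m) (Fin m) ℝ) (hx : ‖x‖ < 1)
    (hnn : ∀ i j, 0 ≤ x i j) :
    ∃ u : Fin m → ℝ, (∀ i, 1 ≤ u i) ∧ x *ᵥ u = u - (fun _ => 1) := by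
  haveI : CompleteSpace (Matrix (Fin m) (Fin m) ℝ) := FiniteDimensional.complete ℝ _
  set S := ∑' k : ℕ, x ^ k with hS
  have hsum : Summable (fun k : ℕ => x ^ k) := summable_geometric_of_norm_lt_one hx
  have key : (1 - x) * S = 1 := mul_neg_geom_series x hx
  have hSnn : ∀ i j, 0 ≤ S i j := by
    intro i j
    have hc : Continuous fun M : Matrix (Fin m) (Fin m) ℝ => M i j :=
      (Matrix.entryLinearMap ℝ ℝ i j).continuous_of_finiteDimensional
    have hhs : HasSum (fun k : ℕ => (x ^ k) i j) (S i j) :=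
      hsum.hasSum.map (Matrix.entryLinearMap ℝ ℝ i j).toAddMonoidHom hc
    exact hasSum_le (fun k => StmtAux.pow_entry_nonneg x hnn k i j) hasSum_zero hhs
  have hxS : x * S = S - 1 := by
    have h2 : S - x * S = 1 := by rw [← key, sub_mul, one_mul]
    rw [← h2]; abel
  refine ⟨S *ᵥ (fun _ => 1), ?_, ?_⟩
  · intro i
    have h4 : S = 1 + x * S := by rw [hxS]; abel
    have h5 : S *ᵥ (fun _ => 1) = (fun _ => 1) + (x * S) *ᵥ (fun _ => 1) := by
      nth_rewrite 1 [h4]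
      rw [Matrix.add_mulVec, Matrix.one_mulVec]
    rw [h5]
    have h3 : 0 ≤ ((x * S) *ᵥ (fun _ => 1)) i := by
      rw [Matrix.mulVec]
      refine Finset.sum_nonneg fun j _ => ?_
      have : 0 ≤ (x * S) i j := by
        rw [Matrix.mul_apply]
        exact Finset.sum_nonneg fun l _ => mul_nonneg (hnn i l) (hSnn l j)
      simpa [dotProduct] using mul_nonneg this zero_le_one
    simpa using h3
  · rw [Matrix.mulVec_mulVec, hxS, Matrix.sub_mulVec, Matrix.one_mulVec]

/-- Any nonnegative matrix with spectral radius strictly less than one is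
skew-sub-stochastic. -/
theorem stmt_5 {n : ℕ} (B : Matrix (Fin n) (Fin n) ℝ)
    (hB : ∀ i j, 0 ≤ B i j) (hρ : specRad B < 1) :
    SkewSubStochastic B := by
  rcases Nat.eq_zero_or_pos n with hn | hn
  · subst hn
    exact ⟨0, fun _ => 1, fun _ => 1, fun i => i.elim0, fun i => i.elim0,
      fun i => i.elim0, fun i => i.elim0, fun i => i.elim0⟩
  -- the complex matrix and its transpose
  set C := B.map (Complex.ofReal : ℝ → ℂ) with hC
  set p := C.charpoly with hp
  -- all spectrum elements of `Cᵀ` have modulus `< 1`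
  have hbdd : BddAbove {r : ℝ | ∃ z : ℂ, p.IsRoot z ∧ r = ‖z‖} := by
    have hsub : {r : ℝ | ∃ z : ℂ, p.IsRoot z ∧ r = ‖z‖} ⊆
        (fun z : ℂ => ‖z‖) '' (p.roots.toFinset : Set ℂ) := by
      rintro r ⟨z, hz, rfl⟩
      exact ⟨z, by simpa using ⟨C.charpoly_monic.ne_zero, hz⟩, rfl⟩
    exact (((p.roots.toFinset : Set ℂ).toFinite.image _).subset hsub).bddAbove
  have hspec : ∀ z ∈ spectrum ℂ Cᵀ, ‖z‖₊ < 1 := by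
    intro z hz
    have hroot : p.IsRoot z := by
      have := StmtAux.isRoot_charpoly_of_mem_spectrum Cᵀ z hz
      rwa [StmtAux.charpoly_transpose] at this
    have hle : ‖z‖ ≤ specRad B :=
      le_csSup hbdd ⟨z, hroot, rfl⟩
    have : ‖z‖ < 1 := lt_of_le_of_lt (by exact hle) hρ
    exact this
  -- a power of `Bᵀ` with norm `< 1`
  obtain ⟨k, hk1, hknorm⟩ := StmtAux.exists_pow_norm_lt_one hn Cᵀ hspec
  have hmap : ((Bᵀ) ^ k).map (Complex.ofReal : ℝ → ℂ) = Cᵀ ^ k := by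
    have h1 := map_pow (RingHom.mapMatrix Complex.ofRealHom :
      Matrix (Fin n) (Fin n) ℝ →+* Matrix (Fin n) (Fin n) ℂ) Bᵀ k
    simp only [RingHom.mapMatrix_apply] at h1
    rw [show (Bᵀ).map (⇑Complex.ofRealHom) = Cᵀ by
      rw [hC]; ext i j; simp [Matrix.transpose_apply, Matrix.map_apply]] at h1
    exact h1
  have hxnorm : ‖(Bᵀ) ^ k‖ < 1 := by
    have : ‖((Bᵀ) ^ k).map (Complex.ofReal : ℝ → ℂ)‖ = ‖(Bᵀ) ^ k‖ := by
      rw [Matrix.linfty_opNorm_def, Matrix.linfty_opNorm_def]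
      simp [Matrix.map_apply]
    rw [← this, hmap]
    exact hknorm
  -- the vector u
  have hBtnn : ∀ i j, 0 ≤ (Bᵀ) i j := fun i j => hB j i
  obtain ⟨u, hu1, hxu⟩ := StmtAux.exists_u ((Bᵀ) ^ k) hxnorm
    (StmtAux.pow_entry_nonneg Bᵀ hBtnn k)
  have hu0 : ∀ i, 0 ≤ u i := fun i => le_trans zero_le_one (hu1 i)
  -- the vector s
  set f : ℕ → (Fin n → ℝ) := fun j => ((Bᵀ) ^ j) *ᵥ u with hf
  set s : Fin n → ℝ := ∑ j ∈ Finset.range k, f j with hs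
  have hfnn : ∀ j i, 0 ≤ f j i := by
    intro j i
    simp only [hf, Matrix.mulVec, dotProduct]
    exact Finset.sum_nonneg fun l _ =>
      mul_nonneg (StmtAux.pow_entry_nonneg Bᵀ hBtnn j i l) (hu0 l)
  have hs1 : ∀ i, 1 ≤ s i := by
    intro i
    have h0mem : (0 : ℕ) ∈ Finset.range k := Finset.mem_range.mpr hk1
    have : f 0 i ≤ ∑ j ∈ Finset.range k, f j i :=
      Finset.single_le_sum (fun j _ => hfnn j i) h0mem
    have hf0 : f 0 i = u i := by rw [hf]; simp [Matrix.one_mulVec]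
    calc (1 : ℝ) ≤ u i := hu1 i
      _ = f 0 i := hf0.symm
      _ ≤ ∑ j ∈ Finset.range k, f j i := this
      _ = s i := by rw [hs, Finset.sum_apply]
  have hs0 : ∀ i, 0 < s i := fun i => lt_of_lt_of_le zero_lt_one (hs1 i)
  -- the key identity : Bᵀ *ᵥ s = s - 1
  have hkey : Bᵀ *ᵥ s = s - (fun _ => 1) := by
    have h6 : Bᵀ *ᵥ s = ∑ j ∈ Finset.range k, f (j + 1) := by
      rw [hs]
      rw [show Bᵀ *ᵥ (∑ j ∈ Finset.range k, f j)
          = ∑ j ∈ Finset.range k, Bᵀ *ᵥ f j from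
        map_sum (Matrix.mulVecLin Bᵀ) f (Finset.range k)]
      refine Finset.sum_congr rfl fun j _ => ?_
      rw [hf, Matrix.mulVec_mulVec, ← pow_succ']
    have h7 : ∑ j ∈ Finset.range k, f (j + 1)
        = (∑ j ∈ Finset.range k, f j) + f k - f 0 := by
      have ha := Finset.sum_range_succ' f k
      have hb := Finset.sum_range_succ f k
      rw [hb] at ha
      rw [eq_sub_iff_add_eq]
      exact ha.symm
    have hfk : f k = u - (fun _ => 1) := hxu
    have hf0 : f 0 = u := by rw [hf]; simp [Matrix.one_mulVec]
    rw [h6, h7, hfk, hf0, ← hs]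
    abel
  -- assemble the witnesses
  refine ⟨fun i j => s i * B i j, fun _ => 1, fun _ => 1, ?_, ?_, ?_, ?_, ?_⟩
  · exact fun i j => mul_nonneg (hs0 i).le (hB i j)
  · exact fun i => ⟨zero_lt_one, le_refl 1⟩
  · exact fun i => zero_le_one
  · intro i
    have hcol : (∑ l, s l * B l i) = s i - 1 := by
      have : (Bᵀ *ᵥ s) i = s i - 1 := by rw [hkey]; simp
      rw [← this, Matrix.mulVec]
      simp [dotProduct, Matrix.transpose_apply, mul_comm]
    rw [hcol]
    show (0:ℝ) < 1 + (s i - 1)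
    linarith [hs0 i]
  · intro i j
    have hcol : (∑ l, s l * B l i) = s i - 1 := by
      have : (Bᵀ *ᵥ s) i = s i - 1 := by rw [hkey]; simp
      rw [← this, Matrix.mulVec]
      simp [dotProduct, Matrix.transpose_apply, mul_comm]
    rw [hcol]
    show B i j = 1 * (s i * B i j) / (1 + (s i - 1))
    rw [one_mul, show (1 : ℝ) + (s i - 1) = s i by ring,
      mul_comm (s i) (B i j), mul_div_assoc, div_self (hs0 i).ne', mul_one]
end

section
/- The matrix B = [[1, 0], [2, 1]] has spectral radius 1 but is not skew-sub-stochastic: there do not exist a(i,j) ≥ 0, γ_i ∈ (0,1], G_i ≥ 0 with G_i + Σ_k a(k,i) > 0 such that B(i,j) = γ_i · a(i,j) / (G_i + Σ_k a(k,i)) for all i, j ∈ {1,2}. -/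
lemma map_B : (!![(1 : ℝ), 0; 2, 1]).map (Complex.ofReal : ℝ → ℂ) =
    !![(1 : ℂ), 0; 2, 1] := by
  ext i j
  fin_cases i <;> fin_cases j <;> simp [Matrix.map_apply]

lemma charpoly_B : Matrix.charpoly ((!![(1 : ℝ), 0; 2, 1]).map (Complex.ofReal : ℝ → ℂ)) =
    (Polynomial.X - Polynomial.C 1) ^ 2 := by
  rw [map_B, Matrix.charpoly, Matrix.det_fin_two]
  simp [Matrix.charmatrix_apply_eq, Matrix.charmatrix_apply_ne]
  ring

/-- The matrix `[[1,0],[2,1]]` has spectral radius one, yet it is not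
skew-sub-stochastic. -/
theorem stmt_6 :
    specRad (!![(1 : ℝ), 0; 2, 1]) = 1 ∧ ¬ SkewSubStochastic (!![(1 : ℝ), 0; 2, 1]) := by
  constructor
  · have hset : {r : ℝ | ∃ z : ℂ,
        (Matrix.charpoly ((!![(1 : ℝ), 0; 2, 1]).map (Complex.ofReal : ℝ → ℂ))).IsRoot z ∧
        r = ‖z‖} = {1} := by
      ext r
      simp only [Set.mem_setOf_eq, Set.mem_singleton_iff, charpoly_B]
      constructor
      · rintro ⟨z, hz, rfl⟩
        have hz1 : z = 1 := by
          have := hz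
          simp [Polynomial.IsRoot, sub_eq_zero] at this
          exact this
        simp [hz1]
      · rintro rfl
        exact ⟨1, by simp [Polynomial.IsRoot], by simp⟩
    rw [specRad, hset, csSup_singleton]
  · rintro ⟨a, γ, G, ha, hγ, hG, hpos, hB⟩
    have h00 := hB 0 0
    have h10 := hB 1 0
    have hD0 := hpos 0
    rw [Fin.sum_univ_two] at h00 h10 hD0
    simp [Matrix.cons_val_zero, Matrix.cons_val_one] at h00 h10
    -- from h00 : 1 = γ 0 * a 0 0 / (G 0 + (a 0 0 + a 1 0))
    have hγ0 := hγ 0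
    have hγ1 := hγ 1
    have heq : γ 0 * a 0 0 = G 0 + (a 0 0 + a 1 0) := by
      field_simp at h00
      linarith [h00]
    have hle : γ 0 * a 0 0 ≤ a 0 0 := by
      have := mul_le_of_le_one_left (ha 0 0) hγ0.2
      linarith
    have ha10 : a 1 0 = 0 := by
      have := hG 0
      have := ha 1 0
      linarith
    rw [ha10] at h10
    have hD1 := hpos 1
    rw [Fin.sum_univ_two] at hD1
    have : (2 : ℝ) = 0 := by
      rw [h10]
      simp
    linarith
end

section
/- Let ε be a positive integer, let p_1,...,p_n > 0 with z = Σ_k k p_k, β_k > 0, λ_k ∈ (0,1], set β̄ = (1/z)Σ_k k p_k β_k λ_k, and define the n×n matrix A by A(i,j) = β_i·(ε·δ_{ij} + i·p_j·λ_i)/(z·β̄ + ε·β_i), where δ_{ij} is the Kronecker delta. Then 1 is an eigenvalue of A and the spectral radius of A equals 1. -/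
lemma charpoly_eval_aux {K : Type*} [Field K] {n : ℕ} (M : Matrix (Fin n) (Fin n) K) (x : K) :
    M.charpoly.eval x = (x • (1 : Matrix (Fin n) (Fin n) K) - M).det := by
  rw [Matrix.charpoly, ← Polynomial.coe_evalRingHom, RingHom.map_det]
  congr 1
  ext i j
  simp [Matrix.charmatrix_apply, Matrix.one_apply, Matrix.diagonal_apply]
  split_ifs <;> simp

/-- First moment matrix of Model 2 with restricted sharing parameter
`δ = ε ≥ 1` and zero innovation: `1` is an eigenvalue of `A` and the spectral radius of
`A` equals one. Type `i : Fin n` has out-degree `i + 1`. -/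
theorem stmt_11 (n : ℕ) (hn : 0 < n) (ε : ℕ) (hε : 0 < ε) (p β lam : Fin n → ℝ)
    (hp : ∀ k, 0 < p k) (hβ : ∀ k, 0 < β k)
    (hlam : ∀ k, lam k ∈ Set.Ioc (0 : ℝ) 1)
    (z βbar : ℝ)
    (hz : z = ∑ k, ((k.1 : ℝ) + 1) * p k)
    (hβbar : βbar = (1 / z) * ∑ k, ((k.1 : ℝ) + 1) * p k * β k * lam k)
    (A : Matrix (Fin n) (Fin n) ℝ)
    (hA : ∀ i j, A i j =
      β i * ((ε : ℝ) * (if i = j then 1 else 0) + ((i.1 : ℝ) + 1) * p j * lam i) /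
        (z * βbar + (ε : ℝ) * β i)) :
    (Matrix.charpoly A).IsRoot 1 ∧ specRad A = 1 := by
  have hnempty : (Finset.univ : Finset (Fin n)).Nonempty := ⟨⟨0, hn⟩, Finset.mem_univ _⟩
  -- positivity facts
  have hzpos : 0 < z := by
    rw [hz]
    apply Finset.sum_pos _ hnempty
    intro k _
    have := hp k
    positivity
  have hsum : ∑ k, ((k.1 : ℝ) + 1) * p k * β k * lam k = z * βbar := by
    rw [hβbar]; field_simp
  have hβbarpos : 0 < βbar := by
    have hspos : 0 < ∑ k, ((k.1 : ℝ) + 1) * p k * β k * lam k := by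
      apply Finset.sum_pos _ hnempty
      intro k _
      have h1 := hp k; have h2 := hβ k; have h3 := (hlam k).1
      positivity
    rw [hβbar]; positivity
  have hD : ∀ i : Fin n, 0 < z * βbar + (ε : ℝ) * β i := by
    intro i
    have h1 := hβ i
    have hε' : (0 : ℝ) < (ε : ℝ) := by exact_mod_cast hε
    positivity
  -- the positive eigenvector
  set v : Fin n → ℝ := fun i => ((i.1 : ℝ) + 1) * β i * lam i with hvdef
  have hv : ∀ i, 0 < v i := by
    intro i
    have h1 := hβ i; have h2 := (hlam i).1
    positivity
  have hAnn : ∀ i j, 0 ≤ A i j := by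
    intro i j
    rw [hA]
    apply div_nonneg _ (hD i).le
    have h1 := hβ i; have h2 := hp j; have h3 := (hlam i).1
    have h4 : (0:ℝ) ≤ (ε : ℝ) * (if i = j then 1 else 0) := by positivity
    have h5 : (0:ℝ) ≤ ((i.1 : ℝ) + 1) * p j * lam i := by positivity
    exact mul_nonneg h1.le (add_nonneg h4 h5)
  have hpv : ∑ j, p j * v j = z * βbar := by
    rw [← hsum]
    exact Finset.sum_congr rfl fun j _ => by simp only [hvdef]; ring
  have key : ∀ i, ∑ j, A i j * v j = v i := by
    intro i
    have step : ∀ j, A i j * v j =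
        ((β i * (ε : ℝ)) * (if i = j then v j else 0) +
          (β i * ((i.1 : ℝ) + 1) * lam i) * (p j * v j)) / (z * βbar + (ε : ℝ) * β i) := by
      intro j
      rw [hA]
      split_ifs <;> ring
    calc ∑ j, A i j * v j
        = (∑ j, ((β i * (ε : ℝ)) * (if i = j then v j else 0) +
            (β i * ((i.1 : ℝ) + 1) * lam i) * (p j * v j))) / (z * βbar + (ε : ℝ) * β i) := by
          rw [Finset.sum_div]; exact Finset.sum_congr rfl fun j _ => step j
      _ = ((β i * (ε : ℝ)) * v i +
            (β i * ((i.1 : ℝ) + 1) * lam i) * (z * βbar)) / (z * βbar + (ε : ℝ) * β i) := by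
          rw [Finset.sum_add_distrib, ← Finset.mul_sum, ← Finset.mul_sum, hpv,
            Finset.sum_ite_eq]
          simp
      _ = v i := by
          have hD' := (hD i).ne'
          rw [div_eq_iff hD', hvdef]
          ring
  have hmulVec : A.mulVec v = v := by
    funext i
    simpa [Matrix.mulVec, dotProduct] using key i
  have hvne : v ≠ 0 := by
    intro h
    exact absurd (congrFun h ⟨0, hn⟩) (hv ⟨0, hn⟩).ne'
  -- Part 1: 1 is a root of the real charpoly
  have root1 : (Matrix.charpoly A).IsRoot 1 := by
    rw [Polynomial.IsRoot, charpoly_eval_aux]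
    rw [← Matrix.exists_mulVec_eq_zero_iff]
    refine ⟨v, hvne, ?_⟩
    rw [Matrix.sub_mulVec, Matrix.smul_mulVec, Matrix.one_mulVec, hmulVec, one_smul,
      sub_self]
  -- Root over ℂ
  have root1C : ((A.map (Complex.ofReal : ℝ → ℂ)).charpoly).IsRoot 1 := by
    have hmap : (A.map (Complex.ofReal : ℝ → ℂ)).charpoly
        = (Matrix.charpoly A).map (Complex.ofRealHom) :=
      Matrix.charpoly_map A Complex.ofRealHom
    rw [hmap]
    have := root1
    rw [Polynomial.IsRoot] at this ⊢
    rw [show (1 : ℂ) = Complex.ofRealHom 1 by simp, Polynomial.eval_map,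
      Polynomial.eval₂_at_apply, this, map_zero]
  -- Bound: every complex root has modulus at most 1
  have bound : ∀ u : ℂ, ((A.map (Complex.ofReal : ℝ → ℂ)).charpoly).IsRoot u →
      ‖u‖ ≤ 1 := by
    intro u hu
    have hdet : (u • (1 : Matrix (Fin n) (Fin n) ℂ) - A.map Complex.ofReal).det = 0 := by
      rw [← charpoly_eval_aux]; exact hu
    obtain ⟨x, hx0, hxe⟩ := Matrix.exists_mulVec_eq_zero_iff.mpr hdet
    have heig : ∀ i, ∑ j, (A i j : ℂ) * x j = u * x i := by
      intro i
      have h := congrFun hxe i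
      rw [Matrix.sub_mulVec, Matrix.smul_mulVec, Matrix.one_mulVec] at h
      have h' : u * x i - ∑ j, (A i j : ℂ) * x j = 0 := by
        simpa [Matrix.mulVec, dotProduct, Matrix.map_apply, smul_eq_mul] using h
      exact (sub_eq_zero.mp h').symm
    obtain ⟨i0, _, hi0⟩ := Finset.exists_max_image Finset.univ
      (fun i => ‖x i‖ / v i) hnempty
    obtain ⟨j0, hj0⟩ : ∃ j, x j ≠ 0 := by
      by_contra h
      push_neg at h
      exact hx0 (funext h)
    have hcpos : 0 < ‖x i0‖ / v i0 := by
      refine lt_of_lt_of_le ?_ (hi0 j0 (Finset.mem_univ _))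
      exact div_pos (by simpa using hj0) (hv j0)
    have hxi0pos : 0 < ‖x i0‖ := by
      by_contra h
      push_neg at h
      have : ‖x i0‖ = 0 := le_antisymm h (norm_nonneg _)
      rw [this, zero_div] at hcpos
      exact lt_irrefl 0 hcpos
    set c : ℝ := ‖x i0‖ / v i0 with hc
    have hle : ∀ j, ‖x j‖ ≤ c * v j := by
      intro j
      have := hi0 j (Finset.mem_univ _)
      calc ‖x j‖ = ‖x j‖ / v j * v j := by
            rw [div_mul_cancel₀ _ (hv j).ne']
        _ ≤ c * v j := mul_le_mul_of_nonneg_right this (hv j).le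
    have main : ‖u‖ * ‖x i0‖ ≤ ‖x i0‖ := by
      calc ‖u‖ * ‖x i0‖
          = ‖∑ j, (A i0 j : ℂ) * x j‖ := by rw [heig i0, norm_mul]
        _ ≤ ∑ j, ‖(A i0 j : ℂ) * x j‖ := norm_sum_le _ _
        _ = ∑ j, A i0 j * ‖x j‖ := by
            refine Finset.sum_congr rfl fun j _ => ?_
            rw [norm_mul, Complex.norm_real, Real.norm_of_nonneg (hAnn i0 j)]
        _ ≤ ∑ j, A i0 j * (c * v j) :=
            Finset.sum_le_sum fun j _ => mul_le_mul_of_nonneg_left (hle j) (hAnn i0 j)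
        _ = c * ∑ j, A i0 j * v j := by
            rw [Finset.mul_sum]
            exact Finset.sum_congr rfl fun j _ => by ring
        _ = c * v i0 := by rw [key i0]
        _ = ‖x i0‖ := by
            rw [hc, div_mul_cancel₀]
            exact (hv i0).ne'
    have := (mul_le_iff_le_one_left hxi0pos).mp (by linarith [main])
    linarith [this]
  refine ⟨root1, ?_⟩
  have hmem : (1 : ℝ) ∈ {r : ℝ | ∃ w : ℂ,
      (Matrix.charpoly (A.map (Complex.ofReal : ℝ → ℂ))).IsRoot w ∧ r = ‖w‖} :=
    ⟨1, root1C, by simp⟩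
  have hbdd : ∀ r ∈ {r : ℝ | ∃ w : ℂ,
      (Matrix.charpoly (A.map (Complex.ofReal : ℝ → ℂ))).IsRoot w ∧ r = ‖w‖},
      r ≤ 1 := by
    rintro r ⟨w, hw, rfl⟩
    exact bound w hw
  unfold specRad
  exact le_antisymm (csSup_le ⟨1, hmem⟩ hbdd) (le_csSup ⟨1, hbdd⟩ hmem)
end

section
/- Let ε be a positive integer and let A(i,j) = (1−μ_i)β_i(ε δ_{ij} + i p_j λ_i)/(μ_i β_i + z β̄ + ε β_i) with p_k > 0, z = Σ_k k p_k, β_k > 0, λ_k ∈ (0,1], μ_k ∈ [0,1), β̄ = (1/z)Σ_k k p_k β_k λ_k. If μ_i > 0 for at least one index i, then the spectral radius of A is strictly less than 1. -/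
/-- First moment matrix of Model 2 with restricted sharing parameter
`δ = ε ≥ 1` and innovation: if some innovation probability is positive, the spectral
radius of `A` is strictly less than one. Type `i : Fin n` has out-degree `i + 1`. -/
theorem stmt_12 (n : ℕ) (hn : 0 < n) (ε : ℕ) (hε : 0 < ε) (p β lam μ : Fin n → ℝ)
    (hp : ∀ k, 0 < p k) (hβ : ∀ k, 0 < β k)
    (hlam : ∀ k, lam k ∈ Set.Ioc (0 : ℝ) 1) (hμ : ∀ k, μ k ∈ Set.Ico (0 : ℝ) 1)
    (z βbar : ℝ)
    (hz : z = ∑ k, ((k.1 : ℝ) + 1) * p k)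
    (hβbar : βbar = (1 / z) * ∑ k, ((k.1 : ℝ) + 1) * p k * β k * lam k)
    (A : Matrix (Fin n) (Fin n) ℝ)
    (hA : ∀ i j, A i j =
      (1 - μ i) * β i * ((ε : ℝ) * (if i = j then 1 else 0) + ((i.1 : ℝ) + 1) * p j * lam i) /
        (μ i * β i + z * βbar + (ε : ℝ) * β i))
    (h0 : ∃ i, 0 < μ i) :
    specRad A < 1 := by
  classical
  have hne : (Finset.univ : Finset (Fin n)).Nonempty := Finset.univ_nonempty_iff.mpr ⟨⟨0, hn⟩⟩
  -- basic positivity facts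
  have hz' : 0 < z := by
    rw [hz]
    refine Finset.sum_pos (fun k _ => ?_) hne
    have := hp k; positivity
  have hW : ∀ k : Fin n, 0 < ((k.1 : ℝ) + 1) * p k * β k * lam k := by
    intro k
    have := hp k; have := hβ k; have := (hlam k).1
    positivity
  have hzβbar : z * βbar = ∑ k, ((k.1 : ℝ) + 1) * p k * β k * lam k := by
    rw [hβbar]; field_simp
  have hzb' : 0 < z * βbar := by
    rw [hzβbar]
    exact Finset.sum_pos (fun k _ => hW k) hne
  -- denominators
  set d : Fin n → ℝ := fun i => μ i * β i + z * βbar + (ε : ℝ) * β i with hd_def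
  have hd : ∀ i, 0 < d i := by
    intro i
    have h1 := (hμ i).1; have h2 := hβ i
    have h3 : 0 ≤ μ i * β i := by positivity
    have h4 : 0 < (ε : ℝ) * β i := by positivity
    simp only [hd_def]; nlinarith
  set e : Fin n → ℝ := fun i => μ i * β i + (ε : ℝ) * (μ i * β i) + z * βbar with he_def
  have he : ∀ i, 0 < e i := by
    intro i
    have h1 := (hμ i).1; have h2 := hβ i
    have h3 : 0 ≤ μ i * β i := by positivity
    have h4 : 0 ≤ (ε : ℝ) * (μ i * β i) := by positivity
    simp only [he_def]; nlinarith
  -- the rank-one decomposition coefficients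
  set a : Fin n → ℝ := fun i => (ε : ℝ) * ((1 - μ i) * β i) / d i with ha_def
  set b : Fin n → ℝ := fun i => (1 - μ i) * β i * ((i.1 : ℝ) + 1) * lam i / d i with hb_def
  have hAab : ∀ i j, A i j = a i * (if i = j then 1 else 0) + b i * p j := by
    intro i j
    rw [hA i j]
    simp only [ha_def, hb_def, hd_def]
    rw [div_mul_eq_mul_div, div_mul_eq_mul_div, ← add_div]
    congr 1
    ring
  have hμ1 : ∀ i, 0 < 1 - μ i := fun i => by have := (hμ i).2; linarith
  have ha_nonneg : ∀ i, 0 ≤ a i := by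
    intro i
    have := hμ1 i; have := hβ i; have := hd i
    positivity
  have hde : ∀ i, d i - (ε : ℝ) * ((1 - μ i) * β i) = e i := by
    intro i; simp only [hd_def, he_def]; ring
  have ha_lt : ∀ i, a i < 1 := by
    intro i
    rw [ha_def, div_lt_one (hd i)]
    have h1 := hde i
    have h2 := he i
    linarith
  have hb_pos : ∀ i, 0 < b i := by
    intro i
    have h1 := hμ1 i; have h2 := hβ i; have h3 := hd i; have h4 := (hlam i).1
    have h5 : (0:ℝ) < (i.1 : ℝ) + 1 := by positivity
    simp only [hb_def]
    positivity
  -- 1 - a i = e i / d i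
  have h1a : ∀ i, 1 - a i = e i / d i := by
    intro i
    rw [eq_div_iff (hd i).ne', sub_mul, one_mul, ha_def,
      div_mul_cancel₀ _ (hd i).ne']
    linarith [hde i]
  have h1a_pos : ∀ i, 0 < 1 - a i := fun i => by rw [h1a i]; exact div_pos (he i) (hd i)
  -- THE KEY REAL INEQUALITY : ∑ p i * b i / (1 - a i) < 1
  have hkey : ∑ i, p i * b i / (1 - a i) < 1 := by
    have hterm : ∀ i, p i * b i / (1 - a i)
        = (1 - μ i) * (((i.1 : ℝ) + 1) * p i * β i * lam i) / e i := by
      intro i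
      rw [h1a i]
      have hdne := (hd i).ne'
      have hene := (he i).ne'
      simp only [hb_def]
      field_simp
    have hsum1 : ∑ i, (((i.1 : ℝ) + 1) * p i * β i * lam i) / (z * βbar) = 1 := by
      rw [← Finset.sum_div, ← hzβbar, div_self hzb'.ne']
    calc ∑ i, p i * b i / (1 - a i)
        = ∑ i, (1 - μ i) * (((i.1 : ℝ) + 1) * p i * β i * lam i) / e i := by
          exact Finset.sum_congr rfl fun i _ => hterm i
      _ < ∑ i, (((i.1 : ℝ) + 1) * p i * β i * lam i) / (z * βbar) := by
          obtain ⟨i₀, hi₀⟩ := h0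
          apply Finset.sum_lt_sum
          · intro i _
            have hwi := (hW i).le
            have hezb : z * βbar ≤ e i := by
              have h1 := (hμ i).1; have h2 := hβ i
              have h3 : 0 ≤ μ i * β i := by positivity
              have h4 : 0 ≤ (ε : ℝ) * (μ i * β i) := by positivity
              simp only [he_def]; nlinarith
            calc (1 - μ i) * (((i.1 : ℝ) + 1) * p i * β i * lam i) / e i
                ≤ (((i.1 : ℝ) + 1) * p i * β i * lam i) / e i := by
                  apply (div_le_div_iff_of_pos_right (he i)).mpr
                  nlinarith [(hμ i).1, hW i]
              _ ≤ (((i.1 : ℝ) + 1) * p i * β i * lam i) / (z * βbar) :=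
                  div_le_div_of_nonneg_left hwi hzb' hezb
          · refine ⟨i₀, Finset.mem_univ _, ?_⟩
            have hwi := hW i₀
            have hezb : z * βbar < e i₀ := by
              have h2 := hβ i₀
              have h3 : 0 < μ i₀ * β i₀ := by positivity
              have h4 : 0 ≤ (ε : ℝ) * (μ i₀ * β i₀) := by positivity
              simp only [he_def]; nlinarith
            calc (1 - μ i₀) * (((i₀.1 : ℝ) + 1) * p i₀ * β i₀ * lam i₀) / e i₀
                ≤ (((i₀.1 : ℝ) + 1) * p i₀ * β i₀ * lam i₀) / e i₀ := by
                  apply (div_le_div_iff_of_pos_right (he i₀)).mpr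
                  nlinarith [(hμ i₀).1, hW i₀]
              _ < (((i₀.1 : ℝ) + 1) * p i₀ * β i₀ * lam i₀) / (z * βbar) :=
                  div_lt_div_of_pos_left hwi hzb' hezb
      _ = 1 := hsum1
  -- the complex matrix
  set M : Matrix (Fin n) (Fin n) ℂ := A.map (Complex.ofReal : ℝ → ℂ) with hM_def
  -- every root of the characteristic polynomial has modulus < 1
  have hroot_lt : ∀ ρ : ℂ, (Matrix.charpoly M).IsRoot ρ → ‖ρ‖ < 1 := by
    intro ρ hρ
    by_contra hge
    push_neg at hge
    -- get eigenvector
    have hdet : (ρ • (1 : Matrix (Fin n) (Fin n) ℂ) - M).det = 0 := by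
      have h1 : Polynomial.eval ρ (Matrix.charpoly M) = 0 := hρ
      rw [Matrix.charpoly] at h1
      have h2 : (Polynomial.evalRingHom ρ) (Matrix.charmatrix M).det
          = (((Matrix.charmatrix M)).map (Polynomial.evalRingHom ρ)).det :=
        RingHom.map_det (Polynomial.evalRingHom ρ) (Matrix.charmatrix M)
      have h3 : ((Matrix.charmatrix M)).map (Polynomial.evalRingHom ρ)
          = ρ • (1 : Matrix (Fin n) (Fin n) ℂ) - M := by
        ext i j
        simp only [Matrix.map_apply, Matrix.charmatrix_apply, Matrix.sub_apply,
          Matrix.smul_apply, Matrix.one_apply, Matrix.diagonal_apply]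
        by_cases hij : i = j <;>
          simp [hij, Polynomial.eval_sub, Polynomial.eval_X, Polynomial.eval_C]
      rw [← h3, ← h2]
      simpa using h1
    obtain ⟨v, hv0, hv⟩ := Matrix.exists_mulVec_eq_zero_iff.mpr hdet
    have hMv : M.mulVec v = ρ • v := by
      have := hv
      rw [Matrix.sub_mulVec, sub_eq_zero] at this
      rw [← this, Matrix.smul_mulVec, Matrix.one_mulVec]
    -- per-coordinate equation
    set s : ℂ := ∑ j, (p j : ℂ) * v j with hs_def
    have hMij : ∀ i j, M i j = (a i : ℂ) * (if i = j then 1 else 0) + (b i : ℂ) * (p j : ℂ) := by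
      intro i j
      simp only [hM_def, Matrix.map_apply, hAab i j]
      push_cast [apply_ite (Complex.ofReal : ℝ → ℂ)]
      split_ifs <;> simp
    have heq : ∀ i, (a i : ℂ) * v i + (b i : ℂ) * s = ρ * v i := by
      intro i
      have h1 : M.mulVec v i = ρ * v i := by
        rw [hMv]; simp [Pi.smul_apply, smul_eq_mul]
      simp only [Matrix.mulVec, dotProduct] at h1
      calc (a i : ℂ) * v i + (b i : ℂ) * s
          = ∑ j, M i j * v j := by
            simp only [hMij, add_mul, Finset.sum_add_distrib, ite_mul, one_mul, zero_mul,
              mul_ite, mul_zero, mul_one]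
            rw [Finset.sum_ite_eq]
            simp [hs_def, Finset.mul_sum]
            ring_nf
        _ = ρ * v i := h1
    -- ρ ≠ a i
    have hρa : ∀ i, ρ - (a i : ℂ) ≠ 0 := by
      intro i
      have h1 : 1 - a i ≤ ‖ρ - (a i : ℂ)‖ := by
        calc 1 - a i ≤ ‖ρ‖ - ‖((a i : ℂ))‖ := by
              rw [Complex.norm_real, Real.norm_eq_abs, abs_of_nonneg (ha_nonneg i)]
              linarith
          _ ≤ ‖ρ - (a i : ℂ)‖ := by
              exact norm_sub_norm_le ρ _
      intro hc
      rw [hc] at h1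
      simp at h1
      linarith [h1a_pos i]
    -- case s = 0
    by_cases hs0 : s = 0
    · have hvall : ∀ i, ((a i : ℂ) - ρ) * v i = 0 := by
        intro i
        have := heq i
        rw [hs0, mul_zero, add_zero] at this
        linear_combination this
      obtain ⟨i, hi⟩ := Function.ne_iff.mp hv0
      have hai : (a i : ℂ) - ρ = 0 := by
        rcases mul_eq_zero.mp (hvall i) with h | h
        · exact h
        · exact absurd h hi
      exact hρa i (by linear_combination -hai)
    -- case s ≠ 0 : ∑ p i b i / (ρ - a i) = 1
    · have hvi : ∀ i, v i = (b i : ℂ) * s / (ρ - (a i : ℂ)) := by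
        intro i
        rw [eq_div_iff (hρa i)]
        linear_combination -heq i
      have hT : ∑ i, ((p i * b i : ℝ) : ℂ) / (ρ - (a i : ℂ)) = 1 := by
        have h1 : s = s * ∑ i, ((p i * b i : ℝ) : ℂ) / (ρ - (a i : ℂ)) := by
          conv_lhs => rw [hs_def]
          rw [Finset.mul_sum]
          refine Finset.sum_congr rfl fun i _ => ?_
          rw [hvi i]
          push_cast
          field_simp
        have h2 : s * 1 = s * ∑ i, ((p i * b i : ℝ) : ℂ) / (ρ - (a i : ℂ)) := by
          rw [mul_one]; exact h1
        exact (mul_left_cancel₀ hs0 h2).symm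
      -- modulus bound
      have habs : (1 : ℝ) ≤ ∑ i, p i * b i / (1 - a i) := by
        calc (1 : ℝ) = ‖∑ i, ((p i * b i : ℝ) : ℂ) / (ρ - (a i : ℂ))‖ := by
              rw [hT]; simp
          _ ≤ ∑ i, ‖((p i * b i : ℝ) : ℂ) / (ρ - (a i : ℂ))‖ := by
              exact norm_sum_le _ _
          _ ≤ ∑ i, p i * b i / (1 - a i) := by
              refine Finset.sum_le_sum fun i _ => ?_
              rw [norm_div, Complex.norm_real, Real.norm_eq_abs,
                abs_of_nonneg (mul_pos (hp i) (hb_pos i)).le]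
              have h1 : 1 - a i ≤ ‖ρ - (a i : ℂ)‖ := by
                calc 1 - a i ≤ ‖ρ‖ - ‖((a i : ℂ))‖ := by
                      rw [Complex.norm_real, Real.norm_eq_abs, abs_of_nonneg (ha_nonneg i)]
                      linarith
                  _ ≤ ‖ρ - (a i : ℂ)‖ := by
                      exact norm_sub_norm_le ρ _
              exact div_le_div_of_nonneg_left (mul_pos (hp i) (hb_pos i)).le (h1a_pos i) h1
      linarith
  -- now conclude about sSup
  have hmonic : (Matrix.charpoly M).Monic := Matrix.charpoly_monic M
  have hM0 : Matrix.charpoly M ≠ 0 := hmonic.ne_zero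
  have hdeg : (Matrix.charpoly M).degree ≠ 0 := by
    rw [Polynomial.degree_eq_natDegree hM0, Matrix.charpoly_natDegree_eq_dim]
    simp [Fintype.card_fin]
    omega
  obtain ⟨ρ0, hρ0⟩ := IsAlgClosed.exists_root (Matrix.charpoly M) hdeg
  set S : Set ℝ := {r : ℝ | ∃ w : ℂ, (Matrix.charpoly M).IsRoot w ∧ r = ‖w‖}
    with hS_def
  have hSne : S.Nonempty := ⟨‖ρ0‖, ρ0, hρ0, rfl⟩
  have hSfin : S.Finite := by
    have : S ⊆ (fun w : ℂ => ‖w‖) '' {w : ℂ | (Matrix.charpoly M).IsRoot w} := by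
      rintro r ⟨w, hw, rfl⟩
      exact ⟨w, hw, rfl⟩
    refine Set.Finite.subset (Set.Finite.image _ ?_) this
    exact Polynomial.finite_setOf_isRoot hM0
  have hmem : sSup S ∈ S := Set.Nonempty.csSup_mem hSne hSfin
  have : specRad A = sSup S := rfl
  rw [this]
  obtain ⟨w, hw, hws⟩ := hmem
  rw [hws]
  exact hroot_lt w hw
end
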